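/- There are no natural numbers k, m, a, l, b, n with a ≥ k and k < m satisfying simultaneously 2^m > (l + b·2^{a−k})·2^{k+1} − n·2^{m+1} and (l + b·2^{a−k})·2^{k+1} − n·2^{m+1} ≥ max(2^m − 2^k, 1). -/
import Mathlib


/-- There are no natural numbers `k, m, a, l, b, n` with `a ≥ k` and `k < m` such that
`2^m > (l + b·2^(a−k))·2^(k+1) − n·2^(m+1) ≥ max(2^m − 2^k, 1)` (computed in `ℤ`). -/
theorem stmt5 :
    ¬ ∃ k m a l b n : ℕ, k ≤ a ∧ k < m ∧
      ((2 ^ m : ℤ) > ((l : ℤ) + (b : ℤ) * 2 ^ (a - k)) * 2 ^ (k + 1) - (n : ℤ) * 2 ^ (m + 1)) ∧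
      (((l : ℤ) + (b : ℤ) * 2 ^ (a - k)) * 2 ^ (k + 1) - (n : ℤ) * 2 ^ (m + 1) ≥
        max ((2 ^ m : ℤ) - 2 ^ k) 1) := by
  rintro ⟨k, m, a, l, b, n, hka, hkm, h1, h2⟩
  set c : ℤ := (l : ℤ) + (b : ℤ) * 2 ^ (a - k) - (n : ℤ) * 2 ^ (m - k) with hc
  have hm1 : m + 1 = (m - k) + (k + 1) := by omega
  have hx : ((l : ℤ) + (b : ℤ) * 2 ^ (a - k)) * 2 ^ (k + 1) - (n : ℤ) * 2 ^ (m + 1)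
      = c * 2 ^ (k + 1) := by
    rw [hm1, pow_add]; ring
  have hm2 : m = (m - 1 - k) + (k + 1) := by omega
  have hpm : (2 : ℤ) ^ m = 2 ^ (m - 1 - k) * 2 ^ (k + 1) := by
    conv_lhs => rw [hm2]
    rw [pow_add]
  rw [hx, hpm] at h1 h2
  have hpos : (0 : ℤ) < 2 ^ (k + 1) := by positivity
  have hclt : c < 2 ^ (m - 1 - k) := lt_of_mul_lt_mul_right h1 hpos.le
  have h2' : c * 2 ^ (k + 1) ≥ 2 ^ (m - 1 - k) * 2 ^ (k + 1) - 2 ^ k :=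
    le_trans (le_max_left _ _) h2
  have hkk : (2 : ℤ) ^ k < 2 ^ (k + 1) := by
    rw [pow_succ]; nlinarith [pow_pos (show (0:ℤ) < 2 by norm_num) k]
  have : (2 ^ (m - 1 - k) - 1) * 2 ^ (k + 1) ≥ c * 2 ^ (k + 1) := by
    apply mul_le_mul_of_nonneg_right (by omega) hpos.le
  nlinarith
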